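/- Let $K$ and $K_1$ be proper cones in $\mathbb{R}^n$ and let $T$ be an invertible real $n \times n$ matrix with $T(K) = K_1$. Then the set of $K$-nonnegative matrices equals $T^{-1} \pi(K_1) T$, i.e. a real $n \times n$ matrix $A$ satisfies $A(K) \subseteq K$ if and only if $T A T^{-1}$ satisfies $(T A T^{-1})(K_1) \subseteq K_1$; consequently $T A T^{-1}$ is $K_1$-nonnegative if and only if for every $K$-semipositive matrix $B$ the matrix $A + B$ is $K$-semipositive. -/

import Mathlib

open Matrix Set

/-- A proper cone in `ℝ^n`: a convex cone that is closed, pointed and has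
nonempty interior. -/
def IsProperCone {n : ℕ} (K : Set (Fin n → ℝ)) : Prop :=
  (∀ x ∈ K, ∀ y ∈ K, x + y ∈ K) ∧
  (∀ a : ℝ, 0 ≤ a → ∀ x ∈ K, a • x ∈ K) ∧
  IsClosed K ∧
  K ∩ (-K) = {(0 : Fin n → ℝ)} ∧
  (interior K).Nonempty

/-- `A` is `K`-semipositive. -/
def Semipositive {n : ℕ} (K : Set (Fin n → ℝ)) (A : Matrix (Fin n) (Fin n) ℝ) : Prop :=
  ∃ x ∈ interior K, A.mulVec x ∈ interior K

section aux

variable {n : ℕ} {K : Set (Fin n → ℝ)}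

lemma add_mem_interior (hadd : ∀ x ∈ K, ∀ y ∈ K, x + y ∈ K)
    {x y : Fin n → ℝ} (hx : x ∈ K) (hy : y ∈ interior K) : x + y ∈ interior K := by
  have hsub : (fun z => x + z) '' interior K ⊆ K := by
    rintro _ ⟨z, hz, rfl⟩
    exact hadd x hx z (interior_subset hz)
  have hopen : IsOpen ((fun z => x + z) '' interior K) :=
    (Homeomorph.addLeft x).isOpenMap _ isOpen_interior
  exact interior_maximal hsub hopen ⟨y, hy, rfl⟩

lemma smul_mem_interior (hsmul : ∀ a : ℝ, 0 ≤ a → ∀ x ∈ K, a • x ∈ K)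
    {a : ℝ} (ha : 0 < a) {y : Fin n → ℝ} (hy : y ∈ interior K) : a • y ∈ interior K := by
  have hsub : (fun z => a • z) '' interior K ⊆ K := by
    rintro _ ⟨z, hz, rfl⟩
    exact hsmul a ha.le z (interior_subset hz)
  have hopen : IsOpen ((fun z => a • z) '' interior K) :=
    (Homeomorph.smulOfNeZero a ha.ne').isOpenMap _ isOpen_interior
  exact interior_maximal hsub hopen ⟨y, hy, rfl⟩

lemma rep (f : (Fin n → ℝ) →L[ℝ] ℝ) (y : Fin n → ℝ) :
    f y = (fun i => f (Pi.single i 1)) ⬝ᵥ y := by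
  have h1 : y = ∑ i, Pi.single i (y i) := (Finset.univ_sum_single y).symm
  calc f y = f (∑ i, Pi.single i (y i)) := by rw [← h1]
    _ = ∑ i, f (Pi.single i (y i)) := map_sum f _ _
    _ = ∑ i, f (Pi.single i 1) * y i := by
        refine Finset.sum_congr rfl fun i _ => ?_
        have : Pi.single i (y i) = y i • (Pi.single i 1 : Fin n → ℝ) := by
          ext j
          by_cases h : j = i <;> simp [Pi.single_apply, h]
        rw [this, _root_.map_smul, smul_eq_mul, mul_comm]
    _ = _ := by simp [dotProduct]

/-- Main lemma: `A` is `K`-nonnegative iff `A + B` is semipositive for all semipositive `B`. -/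
lemma key (hK : IsProperCone K) (A : Matrix (Fin n) (Fin n) ℝ) :
    (∀ x ∈ K, A.mulVec x ∈ K) ↔
      (∀ B : Matrix (Fin n) (Fin n) ℝ, Semipositive K B → Semipositive K (A + B)) := by
  obtain ⟨hadd, hsmul, hclosed, -, hint⟩ := hK
  constructor
  · rintro hA B ⟨x, hx, hBx⟩
    refine ⟨x, hx, ?_⟩
    rw [Matrix.add_mulVec]
    exact add_mem_interior hadd (hA x (interior_subset hx)) hBx
  · intro h
    by_contra hbad
    push_neg at hbad
    obtain ⟨x₀, hx₀, hAx₀⟩ := hbad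
    obtain ⟨e, he⟩ := hint
    -- perturb x₀ into the interior keeping A x₀ ∉ K
    obtain ⟨x₁, hx₁, hAx₁⟩ : ∃ x₁ ∈ interior K, A.mulVec x₁ ∉ K := by
      have hcont : Continuous fun t : ℝ => A.mulVec x₀ + t • A.mulVec e := by
        continuity
      have hopen : IsOpen ((fun t : ℝ => A.mulVec x₀ + t • A.mulVec e) ⁻¹' Kᶜ) :=
        hclosed.isOpen_compl.preimage hcont
      have h0 : (0:ℝ) ∈ (fun t : ℝ => A.mulVec x₀ + t • A.mulVec e) ⁻¹' Kᶜ := by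
        simp [hAx₀]
      obtain ⟨ε, hε, hball⟩ := Metric.isOpen_iff.1 hopen 0 h0
      refine ⟨x₀ + (ε/2) • e, ?_, ?_⟩
      · exact add_mem_interior hadd hx₀ (smul_mem_interior hsmul (by linarith) he)
      · have : (ε/2) ∈ Metric.ball (0:ℝ) ε := by
          simp [abs_of_nonneg, hε.le]
          linarith
        have := hball this
        simpa [Matrix.mulVec_add, Matrix.mulVec_smul] using this
    -- separation: obtain a functional (as a vector w) nonneg on K, negative at A x₁
    have hconv : Convex ℝ K := by
      intro x hx y hy a b ha hb hab
      exact hadd _ (hsmul a ha x hx) _ (hsmul b hb y hy)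
    obtain ⟨w, hwnn, hwA, hwpos⟩ :
        ∃ w : Fin n → ℝ, (∀ a ∈ K, 0 ≤ w ⬝ᵥ a) ∧ (w ⬝ᵥ A.mulVec x₁ < 0) ∧
          (∀ y ∈ interior K, 0 < w ⬝ᵥ y) := by
      obtain ⟨f, u, hfK, hfA⟩ := geometric_hahn_banach_closed_point hconv hclosed hAx₁
      have hgK : ∀ a ∈ K, -u < -f a := fun a ha => neg_lt_neg (hfK a ha)
      have hgA : -f (A.mulVec x₁) < -u := neg_lt_neg hfA
      have h0K : (0 : Fin n → ℝ) ∈ K := by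
        have := hsmul 0 le_rfl x₁ (interior_subset hx₁)
        simpa using this
      have hu0 : -u < 0 := by simpa using hgK 0 h0K
      have hgnn : ∀ a ∈ K, 0 ≤ -f a := by
        intro a ha
        by_contra hneg
        push_neg at hneg
        have hfa : f a > 0 := by linarith
        have ht : (0:ℝ) < u / f a := div_pos (by linarith) hfa
        have := hfK _ (hsmul _ ht.le a ha)
        rw [_root_.map_smul, smul_eq_mul, div_mul_cancel₀ _ hfa.ne'] at this
        exact lt_irrefl _ this
      refine ⟨fun i => -f (Pi.single i 1), ?_, ?_, ?_⟩
      · intro a ha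
        have : (-f) a = (fun i => (-f) (Pi.single i 1)) ⬝ᵥ a := rep (-f) a
        simp only [ContinuousLinearMap.neg_apply] at this
        rw [← this]
        exact hgnn a ha
      · have : (-f) (A.mulVec x₁) = (fun i => (-f) (Pi.single i 1)) ⬝ᵥ (A.mulVec x₁) :=
          rep (-f) _
        simp only [ContinuousLinearMap.neg_apply] at this
        rw [← this]
        linarith
      · intro y hy
        have hrepy : ∀ z, (-f) z = (fun i => (-f) (Pi.single i 1)) ⬝ᵥ z := rep (-f)
        simp only [ContinuousLinearMap.neg_apply] at hrepy
        rw [← hrepy]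
        rcases lt_or_eq_of_le (hgnn y (interior_subset hy)) with h' | h'
        · exact h'
        exfalso
        obtain ⟨ε, hε, hball⟩ := Metric.isOpen_iff.1 isOpen_interior y hy
        set z := A.mulVec x₁ with hz
        set t : ℝ := ε / (2 * (‖z‖ + 1)) with htdef
        have hz1 : (0:ℝ) < ‖z‖ + 1 := by positivity
        have ht : 0 < t := by positivity
        have hmem : y + t • z ∈ Metric.ball y ε := by
          rw [Metric.mem_ball, dist_eq_norm]
          simp only [add_sub_cancel_left, norm_smul, Real.norm_eq_abs, abs_of_pos ht]
          calc t * ‖z‖ < t * (2 * (‖z‖ + 1)) := by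
                apply mul_lt_mul_of_pos_left _ ht
                nlinarith [norm_nonneg z]
            _ = ε := by rw [htdef, div_mul_cancel₀ _ (by positivity)]
        have hK' : y + t • z ∈ K := interior_subset (hball hmem)
        have hnn := hgnn _ hK'
        have hfz : -f z < 0 := by linarith
        rw [map_add, _root_.map_smul, smul_eq_mul] at hnn
        simp only [neg_add] at hnn
        nlinarith
    -- construct the bad semipositive B
    set α : ℝ := w ⬝ᵥ x₁ with hα
    have hαpos : 0 < α := hwpos x₁ hx₁
    set β : ℝ := w ⬝ᵥ A.mulVec x₁ with hβ
    set μ : ℝ := -β / (2 * α) with hμ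
    have hβneg : β < 0 := hwA
    have hμpos : 0 < μ := div_pos (by linarith) (by linarith)
    set c : Fin n → ℝ := (-(1/α)) • (w ᵥ* A + μ • w) with hc
    have hcy : ∀ y, c ⬝ᵥ y = -((w ⬝ᵥ A.mulVec y) + μ * (w ⬝ᵥ y)) / α := by
      intro y
      rw [hc, smul_dotProduct, add_dotProduct, smul_dotProduct, ← Matrix.dotProduct_mulVec]
      simp only [smul_eq_mul]; ring
    set B : Matrix (Fin n) (Fin n) ℝ := Matrix.of (fun i j => x₁ i * c j) with hB
    have hBy : ∀ y, B.mulVec y = (c ⬝ᵥ y) • x₁ := by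
      intro y
      ext i
      simp only [hB, Matrix.mulVec, Matrix.of_apply, dotProduct, Pi.smul_apply, smul_eq_mul,
        Finset.sum_mul]
      exact Finset.sum_congr rfl fun j _ => by ring
    have hcx₁ : 0 < c ⬝ᵥ x₁ := by
      rw [hcy x₁, ← hβ, ← hα]
      apply div_pos _ hαpos
      rw [hμ]
      have : -β / (2 * α) * α = -β / 2 := by field_simp
      rw [this]
      linarith
    have hBsemi : Semipositive K B := by
      refine ⟨x₁, hx₁, ?_⟩
      rw [hBy]
      exact smul_mem_interior hsmul hcx₁ hx₁
    obtain ⟨y, hy, hABy⟩ := h B hBsemi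
    have hwy : 0 < w ⬝ᵥ y := hwpos y hy
    have hpos := hwpos _ hABy
    rw [Matrix.add_mulVec, dotProduct_add, hBy, dotProduct_smul, smul_eq_mul, hcy, ← hα,
      div_mul_cancel₀ _ hαpos.ne'] at hpos
    nlinarith

end aux


theorem stmt_4 {n : ℕ} (K K₁ : Set (Fin n → ℝ))
    (hK : IsProperCone K) (hK₁ : IsProperCone K₁)
    (T : Matrix (Fin n) (Fin n) ℝ) (hT : IsUnit T.det)
    (hTK : T.mulVec '' K = K₁)
    (A : Matrix (Fin n) (Fin n) ℝ) :
    ((∀ x ∈ K, A.mulVec x ∈ K) ↔ (∀ x ∈ K₁, (T * A * T⁻¹).mulVec x ∈ K₁)) ∧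
    ((∀ x ∈ K₁, (T * A * T⁻¹).mulVec x ∈ K₁) ↔
      (∀ B : Matrix (Fin n) (Fin n) ℝ, Semipositive K B → Semipositive K (A + B))) := by
  have hinv : T⁻¹ * T = 1 := Matrix.nonsing_inv_mul T hT
  have hiff1 : (∀ x ∈ K, A.mulVec x ∈ K) ↔ (∀ x ∈ K₁, (T * A * T⁻¹).mulVec x ∈ K₁) := by
    constructor
    · intro hA x hx
      rw [← hTK] at hx
      obtain ⟨y, hy, rfl⟩ := hx
      have : (T * A * T⁻¹).mulVec (T.mulVec y) = T.mulVec (A.mulVec y) := by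
        rw [Matrix.mulVec_mulVec, Matrix.mul_assoc, Matrix.mul_assoc, hinv, Matrix.mul_one,
          ← Matrix.mulVec_mulVec]
      rw [this, ← hTK]
      exact ⟨A.mulVec y, hA y hy, rfl⟩
    · intro hA x hx
      have hTx : T.mulVec x ∈ K₁ := by rw [← hTK]; exact ⟨x, hx, rfl⟩
      have := hA _ hTx
      rw [Matrix.mulVec_mulVec, Matrix.mul_assoc, Matrix.mul_assoc, hinv, Matrix.mul_one,
        ← Matrix.mulVec_mulVec, ← hTK] at this
      obtain ⟨y, hy, hyx⟩ := this
      have : y = A.mulVec x := by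
        have := congrArg (T⁻¹.mulVec) hyx
        rwa [Matrix.mulVec_mulVec, Matrix.mulVec_mulVec, hinv, Matrix.one_mulVec,
          Matrix.one_mulVec] at this
      rwa [← this]
  exact ⟨hiff1, hiff1.symm.trans (key hK A)⟩
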